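/- For all m,n,q,h ∈ ℝ the charge matrix Q(m,n,q,h) belongs to su(2,1), and tr(Q(m,n,q,h)²) = 2(m² + n² − q² − h²); consequently, if g ∈ SU(2,1) and g·Q(m,n,q,h)·g⁻¹ = Q(m′,n′,q′,h′) for some m′,n′,q′,h′ ∈ ℝ, then m² + n² − q² − h² = m′² + n′² − q′² − h′², i.e. conjugation by SU(2,1) preserves the BPS condition m² + n² = q² + h². -/

import Mathlib

open Matrix Complex

noncomputable section

/-- The signature-(2,1) metric `η`. -/
def η : Matrix (Fin 3) (Fin 3) ℂ := !![0,0,-1; 0,1,0; -1,0,0]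

/-- The real Lie algebra `su(2,1) = {X : tr X = 0 and ηX + X†η = 0}` (as a set of matrices,
with the matrix commutator as bracket). -/
def su21 : Set (Matrix (Fin 3) (Fin 3) ℂ) := {X | X.trace = 0 ∧ η * X + Xᴴ * η = 0}

def h4 : Matrix (Fin 3) (Fin 3) ℂ := !![1,0,0; 0,0,0; 0,0,-1]
def h5 : Matrix (Fin 3) (Fin 3) ℂ := !![I,0,0; 0,-2*I,0; 0,0,I]
def e4 : Matrix (Fin 3) (Fin 3) ℂ := !![0,1,0; 0,0,1; 0,0,0]
def e5 : Matrix (Fin 3) (Fin 3) ℂ := !![0,I,0; 0,0,-I; 0,0,0]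
def e45 : Matrix (Fin 3) (Fin 3) ℂ := !![0,0,I; 0,0,0; 0,0,0]
def f4 : Matrix (Fin 3) (Fin 3) ℂ := !![0,0,0; 1,0,0; 0,1,0]
def f5 : Matrix (Fin 3) (Fin 3) ℂ := !![0,0,0; I,0,0; 0,-I,0]
def f45 : Matrix (Fin 3) (Fin 3) ℂ := !![0,0,0; 0,0,0; I,0,0]
/-- The special unitary group `SU(2,1)` (as a set of matrices). -/
def SU21 : Set (Matrix (Fin 3) (Fin 3) ℂ) := {g | g.det = 1 ∧ gᴴ * η * g = η}

/-- The charge matrix `Q(m,n,q,h)`. -/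
def Qc (m n q h : ℝ) : Matrix (Fin 3) (Fin 3) ℂ :=
  (-m : ℝ) • h4 + n • (e45 - f45) - (q / Real.sqrt 2) • (e4 - f4) + (h / Real.sqrt 2) • (e5 + f5)


lemma Qc_eq (m n q h : ℝ) : Qc m n q h =
    !![(-m : ℂ), -((q:ℂ) / Real.sqrt 2) + ((h:ℂ) / Real.sqrt 2) * I, (n : ℂ) * I;
       ((q:ℂ) / Real.sqrt 2) + ((h:ℂ) / Real.sqrt 2) * I, 0, -((q:ℂ) / Real.sqrt 2) - ((h:ℂ) / Real.sqrt 2) * I;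
       -(n : ℂ) * I, ((q:ℂ) / Real.sqrt 2) - ((h:ℂ) / Real.sqrt 2) * I, (m : ℂ)] := by
  simp [Qc, h4, e4, e5, e45, f4, f5, f45]
  exact ⟨by ring, by ring⟩

lemma key (mc nc a b : ℂ) :
    ((!![-mc, -a+b*I, nc*I; a+b*I,0,-a-b*I; -nc*I, a-b*I, mc] : Matrix (Fin 3) (Fin 3) ℂ)^2).trace
      = 2*mc^2 + 2*nc^2 - 4*(a^2+b^2) := by
  rw [sq]
  simp [Matrix.trace_fin_three, Matrix.mul_apply, Fin.sum_univ_three]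
  linear_combination (4*b^2 - 2*nc^2) * Complex.I_sq

lemma trQ (m n q h : ℝ) : (Qc m n q h ^ 2).trace = ((2 * (m^2 + n^2 - q^2 - h^2) : ℝ) : ℂ) := by
  have hs : ((Real.sqrt 2 : ℝ) : ℂ)^2 = 2 := by
    norm_cast; rw [Real.sq_sqrt] <;> norm_num
  rw [Qc_eq, key]
  have ha : ((q:ℂ) / Real.sqrt 2)^2 = (q:ℂ)^2 / 2 := by rw [div_pow, hs]
  have hb : ((h:ℂ) / Real.sqrt 2)^2 = (h:ℂ)^2 / 2 := by rw [div_pow, hs]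
  rw [ha, hb]
  push_cast
  ring

lemma memQ (m n q h : ℝ) : Qc m n q h ∈ su21 := by
  constructor
  · rw [Qc_eq]
    simp [Matrix.trace_fin_three]
  · rw [Qc_eq]
    ext i j
    fin_cases i <;> fin_cases j <;>
      simp [η, Matrix.mul_apply, Fin.sum_univ_three, Matrix.conjTranspose_apply,
        Matrix.vecHead, Matrix.vecTail] <;> ring_nf

/-- The charge matrix lies in `su(2,1)`, `tr(Q²) = 2(m²+n²−q²−h²)`, and consequently
conjugation by `SU(2,1)` preserves the BPS condition `m²+n² = q²+h²`. -/
theorem charge_matrix_BPS_invariant :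
    (∀ m n q h : ℝ, Qc m n q h ∈ su21) ∧
    (∀ m n q h : ℝ, (Qc m n q h ^ 2).trace = ((2 * (m^2 + n^2 - q^2 - h^2) : ℝ) : ℂ)) ∧
    (∀ m n q h m' n' q' h' : ℝ, ∀ g ∈ SU21,
      g * Qc m n q h * g⁻¹ = Qc m' n' q' h' →
        m^2 + n^2 - q^2 - h^2 = m'^2 + n'^2 - q'^2 - h'^2) := by
  refine ⟨memQ, trQ, ?_⟩
  intro m n q h m' n' q' h' g hg hconj
  have hdet : IsUnit g.det := by rw [hg.1]; exact isUnit_one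
  have hinv : g⁻¹ * g = 1 := Matrix.nonsing_inv_mul g hdet
  have htr : (Qc m' n' q' h' ^ 2).trace = (Qc m n q h ^ 2).trace := by
    rw [← hconj, sq, sq]
    have : g * Qc m n q h * g⁻¹ * (g * Qc m n q h * g⁻¹)
        = g * (Qc m n q h * Qc m n q h) * g⁻¹ :=
      calc g * Qc m n q h * g⁻¹ * (g * Qc m n q h * g⁻¹)
          = g * Qc m n q h * (g⁻¹ * (g * (Qc m n q h * g⁻¹))) := by
            simp only [Matrix.mul_assoc]
        _ = g * Qc m n q h * (Qc m n q h * g⁻¹) := by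
            rw [← Matrix.mul_assoc g⁻¹ g, hinv, Matrix.one_mul]
        _ = g * (Qc m n q h * Qc m n q h) * g⁻¹ := by simp only [Matrix.mul_assoc]
    rw [this, Matrix.trace_mul_cycle, ← Matrix.mul_assoc, hinv, Matrix.one_mul]
  rw [trQ, trQ] at htr
  have := Complex.ofReal_injective htr
  linarith
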